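/- Let n, d ≥ 2 and let (S, A) be a partial 3-(n^d + 1, n + 1, 1)-design such that for every point P the derived structure I_P can be uniquely completed to a full 2-(n^d, n, 1)-design I'_P. Suppose P is a point, ℓ is an added line of I'_P, and Q ∈ ℓ is a simple point of I'_P. Then P is a simple point of I'_Q and {P} ∪ (ℓ \ {Q}) is an added line of I'_Q. -/
import Mathlib


open Finset

/-- The lines of the derived structure of `(S, A)` at the point `P`: for each circle `C` of
`A` through `P`, the set `C \ {P}`. -/
def derivedLines {α : Type*} [DecidableEq α] (A : Finset (Finset α)) (P : α) :
    Finset (Finset α) :=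
  (A.filter (fun C => P ∈ C)).image (fun C => C.erase P)

/-- `B` is a completion of the derived structure of `(S, A)` at `P` to a full
2-(n^d, n, 1)-design on `S \ {P}`. -/
def IsDerivedCompletion {α : Type*} [DecidableEq α] (S : Finset α) (n : ℕ) (P : α)
    (A : Finset (Finset α)) (B : Finset (Finset α)) : Prop :=
  derivedLines A P ⊆ B ∧ (∀ L ∈ B, L ⊆ S.erase P ∧ L.card = n) ∧
    ∀ X ∈ S.erase P, ∀ Y ∈ S.erase P, X ≠ Y → ∃! L, L ∈ B ∧ X ∈ L ∧ Y ∈ L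

lemma mem_derivedLines {α : Type*} [DecidableEq α] {A : Finset (Finset α)} {P : α}
    {m : Finset α} : m ∈ derivedLines A P ↔ ∃ C, C ∈ A ∧ P ∈ C ∧ C.erase P = m := by
  simp [derivedLines, Finset.mem_image, Finset.mem_filter, and_assoc]

lemma insert_erase_erase {α : Type*} [DecidableEq α] {C : Finset α} {P Q : α}
    (hPC : P ∈ C) (hne : P ≠ Q) :
    insert P ((C.erase P).erase Q) = C.erase Q := by
  ext x
  simp only [mem_insert, mem_erase]
  constructor
  · rintro (rfl | ⟨hxQ, _, hxC⟩)
    · exact ⟨hne, hPC⟩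
    · exact ⟨hxQ, hxC⟩
  · rintro ⟨hxQ, hxC⟩
    by_cases h : x = P
    · exact Or.inl h
    · exact Or.inr ⟨hxQ, h, hxC⟩

/-- Replication count: in a 2-(|T|, n, 1) design, a point lies on r lines with
r * (n-1) = |T| - 1. -/
lemma rep_count {α : Type*} [DecidableEq α] {T : Finset α} {B : Finset (Finset α)} {n : ℕ}
    (hlines : ∀ L ∈ B, L ⊆ T ∧ L.card = n)
    (hdes : ∀ X ∈ T, ∀ Y ∈ T, X ≠ Y → ∃! L, L ∈ B ∧ X ∈ L ∧ Y ∈ L)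
    {X : α} (hX : X ∈ T) :
    (B.filter (fun L => X ∈ L)).card * (n - 1) = T.card - 1 := by
  have key : T.erase X = (B.filter (fun L => X ∈ L)).biUnion (fun L => L.erase X) := by
    ext Y
    simp only [mem_erase, mem_biUnion, mem_filter]
    constructor
    · rintro ⟨hYX, hYT⟩
      obtain ⟨L, ⟨hL, hXL, hYL⟩, -⟩ := hdes X hX Y hYT (Ne.symm hYX)
      exact ⟨L, ⟨hL, hXL⟩, hYX, hYL⟩
    · rintro ⟨L, ⟨hL, hXL⟩, hYX, hYL⟩
      exact ⟨hYX, (hlines L hL).1 hYL⟩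
  have hdisj : ∀ L1 ∈ B.filter (fun L => X ∈ L), ∀ L2 ∈ B.filter (fun L => X ∈ L),
      L1 ≠ L2 → Disjoint (L1.erase X) (L2.erase X) := by
    intro L1 h1 L2 h2 hne
    simp only [mem_filter] at h1 h2
    rw [Finset.disjoint_left]
    intro Y hY1 hY2
    simp only [mem_erase] at hY1 hY2
    have hYT : Y ∈ T := (hlines L1 h1.1).1 hY1.2
    obtain ⟨L, -, huniq⟩ := hdes X hX Y hYT (Ne.symm hY1.1)
    exact hne ((huniq L1 ⟨h1.1, h1.2, hY1.2⟩).trans (huniq L2 ⟨h2.1, h2.2, hY2.2⟩).symm)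
  have h1 : (T.erase X).card = ∑ L ∈ B.filter (fun L => X ∈ L), (L.erase X).card := by
    rw [key, Finset.card_biUnion hdisj]
  have h2 : ∀ L ∈ B.filter (fun L => X ∈ L), (L.erase X).card = n - 1 := by
    intro L hL
    simp only [mem_filter] at hL
    rw [Finset.card_erase_of_mem hL.2, (hlines L hL.1).2]
  rw [← Finset.card_erase_of_mem hX, h1, Finset.sum_congr rfl h2, Finset.sum_const,
    smul_eq_mul]

theorem stmt_15 {α : Type*} [DecidableEq α] (n d : ℕ) (hn : 2 ≤ n) (hd : 2 ≤ d)
    (S : Finset α) (A : Finset (Finset α))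
    (hS : S.card = n ^ d + 1)
    (hcircles : ∀ C ∈ A, C ⊆ S ∧ C.card = n + 1)
    (hdesign : ∀ P ∈ S, ∀ Q ∈ S, ∀ R ∈ S, P ≠ Q → P ≠ R → Q ≠ R →
      (A.filter (fun C => P ∈ C ∧ Q ∈ C ∧ R ∈ C)).card ≤ 1)
    (I' : α → Finset (Finset α))
    (hI' : ∀ P ∈ S, IsDerivedCompletion S n P A (I' P) ∧
      ∀ B, IsDerivedCompletion S n P A B → B = I' P)
    (P : α) (hP : P ∈ S)
    (ℓ : Finset α) (hℓ : ℓ ∈ I' P) (hadd : ℓ ∉ derivedLines A P)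
    (Q : α) (hQ : Q ∈ ℓ)
    (hsimple : ((I' P).filter (fun m => Q ∈ m ∧ m ∉ derivedLines A P)).card = 1) :
    ((I' Q).filter (fun m => P ∈ m ∧ m ∉ derivedLines A Q)).card = 1 ∧
      insert P (ℓ.erase Q) ∈ I' Q ∧ insert P (ℓ.erase Q) ∉ derivedLines A Q := by
  obtain ⟨⟨hsubP, hlinesP, hdesP⟩, -⟩ := hI' P hP
  have hℓsub : ℓ ⊆ S.erase P := (hlinesP ℓ hℓ).1
  have hℓcard : ℓ.card = n := (hlinesP ℓ hℓ).2
  have hQSP : Q ∈ S.erase P := hℓsub hQ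
  have hQS : Q ∈ S := Finset.mem_of_mem_erase hQSP
  have hPQ : P ≠ Q := fun h => (Finset.notMem_erase P S) (h ▸ hQSP)
  obtain ⟨⟨hsubQ, hlinesQ, hdesQ⟩, -⟩ := hI' Q hQS
  have hPSQ : P ∈ S.erase Q := Finset.mem_erase.mpr ⟨hPQ, hP⟩
  -- replication counts
  have hrP : ((I' P).filter (fun m => Q ∈ m)).card * (n - 1) = n ^ d - 1 := by
    have := rep_count hlinesP hdesP hQSP
    rwa [Finset.card_erase_of_mem hP, hS, Nat.add_sub_cancel] at this
  have hrQ : ((I' Q).filter (fun m => P ∈ m)).card * (n - 1) = n ^ d - 1 := by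
    have := rep_count hlinesQ hdesQ hPSQ
    rwa [Finset.card_erase_of_mem hQS, hS, Nat.add_sub_cancel] at this
  have hn1 : 0 < n - 1 := by omega
  have hrPQ : ((I' P).filter (fun m => Q ∈ m)).card
      = ((I' Q).filter (fun m => P ∈ m)).card :=
    Nat.eq_of_mul_eq_mul_right hn1 (hrP.trans hrQ.symm)
  -- bijection between derived lines through Q at P and derived lines through P at Q
  have hbij : ((I' P).filter (fun m => Q ∈ m ∧ m ∈ derivedLines A P)).card
      = ((I' Q).filter (fun m => P ∈ m ∧ m ∈ derivedLines A Q)).card := by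
    apply Finset.card_bij (fun m _ => insert P (m.erase Q))
    · intro m hm
      simp only [mem_filter] at hm
      obtain ⟨hmI, hQm, hmD⟩ := hm
      obtain ⟨C, hCA, hPC, hCm⟩ := mem_derivedLines.mp hmD
      have hins : insert P (m.erase Q) = C.erase Q := by
        rw [← hCm]; exact insert_erase_erase hPC hPQ
      simp only [mem_filter]
      have hQC : Q ∈ C := by
        rw [← hCm] at hQm; exact Finset.mem_of_mem_erase hQm
      have hD : insert P (m.erase Q) ∈ derivedLines A Q := by
        rw [hins]; exact mem_derivedLines.mpr ⟨C, hCA, hQC, rfl⟩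
      refine ⟨hsubQ hD, ?_, hD⟩
      exact Finset.mem_insert_self P _
    · intro m1 hm1 m2 hm2 heq
      simp only [mem_filter] at hm1 hm2
      have hP1 : P ∉ m1.erase Q := fun h =>
        (Finset.notMem_erase P S) ((hlinesP m1 hm1.1).1 (Finset.mem_of_mem_erase h))
      have hP2 : P ∉ m2.erase Q := fun h =>
        (Finset.notMem_erase P S) ((hlinesP m2 hm2.1).1 (Finset.mem_of_mem_erase h))
      have h1 : m1.erase Q = m2.erase Q := by
        have := congrArg (fun s => Finset.erase s P) heq
        simpa [Finset.erase_insert hP1, Finset.erase_insert hP2] using this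
      calc m1 = insert Q (m1.erase Q) := (Finset.insert_erase hm1.2.1).symm
        _ = insert Q (m2.erase Q) := by rw [h1]
        _ = m2 := Finset.insert_erase hm2.2.1
    · intro m' hm'
      simp only [mem_filter] at hm'
      obtain ⟨hm'I, hPm', hm'D⟩ := hm'
      obtain ⟨C, hCA, hQC, hCm'⟩ := mem_derivedLines.mp hm'D
      have hPC : P ∈ C := by
        rw [← hCm'] at hPm'; exact Finset.mem_of_mem_erase hPm'
      have hmD : C.erase P ∈ derivedLines A P := mem_derivedLines.mpr ⟨C, hCA, hPC, rfl⟩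
      refine ⟨C.erase P, ?_, ?_⟩
      · simp only [mem_filter]
        exact ⟨hsubP hmD, Finset.mem_erase.mpr ⟨Ne.symm hPQ, hQC⟩, hmD⟩
      · rw [← hCm']; exact insert_erase_erase hPC hPQ
  -- splitting counts
  have hsplitP : ((I' P).filter (fun m => Q ∈ m ∧ m ∈ derivedLines A P)).card
      + ((I' P).filter (fun m => Q ∈ m ∧ m ∉ derivedLines A P)).card
      = ((I' P).filter (fun m => Q ∈ m)).card := by
    rw [← Finset.filter_filter (fun m => Q ∈ m) (fun m => m ∈ derivedLines A P),
      ← Finset.filter_filter (fun m => Q ∈ m) (fun m => m ∉ derivedLines A P)]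
    exact Finset.card_filter_add_card_filter_not _
  have hsplitQ : ((I' Q).filter (fun m => P ∈ m ∧ m ∈ derivedLines A Q)).card
      + ((I' Q).filter (fun m => P ∈ m ∧ m ∉ derivedLines A Q)).card
      = ((I' Q).filter (fun m => P ∈ m)).card := by
    rw [← Finset.filter_filter (fun m => P ∈ m) (fun m => m ∈ derivedLines A Q),
      ← Finset.filter_filter (fun m => P ∈ m) (fun m => m ∉ derivedLines A Q)]
    exact Finset.card_filter_add_card_filter_not _
  have hone : ((I' Q).filter (fun m => P ∈ m ∧ m ∉ derivedLines A Q)).card = 1 := by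
    omega
  refine ⟨hone, ?_⟩
  -- the unique added line of I'_Q through P
  obtain ⟨m0, hm0⟩ := Finset.card_eq_one.mp hone
  have hm0mem : m0 ∈ (I' Q).filter (fun m => P ∈ m ∧ m ∉ derivedLines A Q) := by
    rw [hm0]; exact Finset.mem_singleton_self m0
  simp only [mem_filter] at hm0mem
  obtain ⟨hm0I, hPm0, hm0nd⟩ := hm0mem
  -- every point of ℓ other than Q is on m0
  have hsub : ∀ X ∈ ℓ.erase Q, X ∈ m0 := by
    intro X hX
    obtain ⟨hXQ, hXℓ⟩ := Finset.mem_erase.mp hX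
    have hXSP : X ∈ S.erase P := hℓsub hXℓ
    have hXP : X ≠ P := (Finset.mem_erase.mp hXSP).1
    have hXSQ : X ∈ S.erase Q := Finset.mem_erase.mpr ⟨hXQ, Finset.mem_of_mem_erase hXSP⟩
    obtain ⟨L, ⟨hLI, hPL, hXL⟩, -⟩ := hdesQ P hPSQ X hXSQ (Ne.symm hXP)
    have hLnd : L ∉ derivedLines A Q := by
      intro hLd
      obtain ⟨C, hCA, hQC, hCL⟩ := mem_derivedLines.mp hLd
      have hPC : P ∈ C := by rw [← hCL] at hPL; exact Finset.mem_of_mem_erase hPL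
      have hXC : X ∈ C := by rw [← hCL] at hXL; exact Finset.mem_of_mem_erase hXL
      have hCPd : C.erase P ∈ derivedLines A P := mem_derivedLines.mpr ⟨C, hCA, hPC, rfl⟩
      have hQC' : Q ∈ C.erase P := Finset.mem_erase.mpr ⟨Ne.symm hPQ, hQC⟩
      have hXC' : X ∈ C.erase P := Finset.mem_erase.mpr ⟨hXP, hXC⟩
      obtain ⟨L', -, huniq⟩ := hdesP Q hQSP X hXSP (Ne.symm hXQ)
      have : C.erase P = ℓ :=
        (huniq (C.erase P) ⟨hsubP hCPd, hQC', hXC'⟩).trans (huniq ℓ ⟨hℓ, hQ, hXℓ⟩).symm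
      exact hadd (this ▸ hCPd)
    have : L ∈ (I' Q).filter (fun m => P ∈ m ∧ m ∉ derivedLines A Q) :=
      Finset.mem_filter.mpr ⟨hLI, hPL, hLnd⟩
    rw [hm0, Finset.mem_singleton] at this
    exact this ▸ hXL
  have hPnℓ : P ∉ ℓ := fun h => (Finset.notMem_erase P S) (hℓsub h)
  have hsub' : insert P (ℓ.erase Q) ⊆ m0 := by
    intro x hx
    rcases Finset.mem_insert.mp hx with rfl | hx
    · exact hPm0
    · exact hsub x hx
  have hcard' : (insert P (ℓ.erase Q)).card = n := by
    rw [Finset.card_insert_of_notMem (fun h => hPnℓ (Finset.mem_of_mem_erase h)),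
      Finset.card_erase_of_mem hQ, hℓcard]
    omega
  have hm0card : m0.card = n := (hlinesQ m0 hm0I).2
  have heq : insert P (ℓ.erase Q) = m0 :=
    Finset.eq_of_subset_of_card_le hsub' (by rw [hcard', hm0card])
  rw [heq]
  exact ⟨hm0I, hm0nd⟩
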